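/- For every x with 0 < x ≤ A0, the CDF of the channel gain admits the exact series representation ∫_0^x f_h(t) dt = e^{−ν} · ∑_{n=0}^∞ (ν^n/(n!)²) · Γ(n+1, γ²·ln(A0/x)), where Γ(n+1, b) = ∫_b^∞ ξ^n e^{−ξ} dξ is the upper incomplete gamma function. -/

import Mathlib

open Real MeasureTheory

/-- Exact series representation of the channel-gain CDF: for `0 < x ≤ A0`,
`∫_0^x f_h = e^{−ν} ∑_{n} (ν^n/(n!)²) Γ(n+1, γ² ln(A0/x))`, where
`Γ(n+1, b) = ∫_b^∞ ξ^n e^{−ξ} dξ`. -/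
theorem gain_cdf_series
    (A0 ω ℓ σ s : ℝ) (hA0 : 0 < A0) (hω : 0 < ω) (hℓ : 0 < ℓ) (hσ : 0 < σ)
    (hs : 0 ≤ s)
    (γ ν : ℝ) (hγ : γ = ω / (2 * ℓ * σ)) (hν : ν = s ^ 2 / (2 * ℓ ^ 2 * σ ^ 2))
    (I0 fh : ℝ → ℝ)
    (hI0 : ∀ p, I0 p = ∑' n : ℕ, (p / 2) ^ (2 * n) / ((n.factorial : ℝ)) ^ 2)
    (hfh : ∀ t, 0 < t → t ≤ A0 → fh t =
      (γ ^ 2 / A0 ^ (γ ^ 2)) * Real.exp (-ν) * t ^ (γ ^ 2 - 1)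
        * I0 ((s / (ℓ ^ 2 * σ ^ 2)) * Real.sqrt ((ω ^ 2 / 2) * Real.log (A0 / t)))) :
    ∀ x, 0 < x → x ≤ A0 →
      (∫ t in (0 : ℝ)..x, fh t)
        = Real.exp (-ν) *
            ∑' n : ℕ, (ν ^ n / ((n.factorial : ℝ)) ^ 2) *
              ∫ ξ in Set.Ioi (γ ^ 2 * Real.log (A0 / x)),
                ξ ^ n * Real.exp (-ξ) := by
  intro x hx hxA
  have hγ0 : 0 < γ := by rw [hγ]; positivity
  have hγ2 : 0 < γ ^ 2 := by positivity
  have hγ2' : (γ:ℝ) ^ 2 ≠ 0 := hγ2.ne'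
  have hν0 : 0 ≤ ν := by rw [hν]; positivity
  set b : ℝ := γ ^ 2 * Real.log (A0 / x) with hbdef
  have hb0 : 0 ≤ b := mul_nonneg hγ2.le (Real.log_nonneg ((one_le_div hx).mpr hxA))
  set φ : ℝ → ℝ := fun ξ => A0 * Real.exp (-ξ / γ ^ 2) with hφ
  have hφpos : ∀ ξ, 0 < φ ξ := fun ξ => mul_pos hA0 (Real.exp_pos _)
  have hφψ : ∀ t : ℝ, 0 < t → φ (γ ^ 2 * Real.log (A0 / t)) = t := by
    intro t ht
    simp only [hφ]
    rw [show -(γ ^ 2 * Real.log (A0 / t)) / γ ^ 2 = -Real.log (A0 / t) by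
        field_simp, Real.exp_neg, Real.exp_log (div_pos hA0 ht)]
    field_simp
  have hφb : φ b = x := hφψ x hx
  have hφlog : ∀ ξ : ℝ, γ ^ 2 * Real.log (A0 / φ ξ) = ξ := by
    intro ξ
    simp only [hφ]
    have h1 : A0 / (A0 * Real.exp (-ξ / γ ^ 2)) = Real.exp (ξ / γ ^ 2) := by
      rw [neg_div, Real.exp_neg]
      field_simp
    rw [h1, Real.log_exp, mul_div_cancel₀ _ hγ2']
  have hφinj : Function.Injective φ := by
    intro a c h
    have h2 := mul_left_cancel₀ hA0.ne' h
    have h3 := Real.exp_injective h2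
    field_simp at h3
    linarith
  have himg : φ '' Set.Ioi b = Set.Ioo 0 x := by
    ext t
    constructor
    · rintro ⟨ξ, hξ, rfl⟩
      refine ⟨hφpos ξ, ?_⟩
      rw [← hφb]
      have hlt : Real.exp (-ξ / γ ^ 2) < Real.exp (-b / γ ^ 2) :=
        Real.exp_lt_exp.mpr ((div_lt_div_iff_of_pos_right hγ2).mpr (neg_lt_neg hξ))
      exact mul_lt_mul_of_pos_left hlt hA0
    · rintro ⟨ht0, htx⟩
      refine ⟨γ ^ 2 * Real.log (A0 / t), ?_, hφψ t ht0⟩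
      have hlog : Real.log (A0 / x) < Real.log (A0 / t) :=
        Real.log_lt_log (div_pos hA0 hx) (by gcongr)
      exact (mul_lt_mul_iff_right₀ hγ2).mpr hlog

  -- derivative of the substitution
  set φ' : ℝ → ℝ := fun ξ => A0 * (Real.exp (-ξ / γ ^ 2) * (-1 / γ ^ 2)) with hφ'
  have hderiv : ∀ ξ ∈ Set.Ioi b, HasDerivWithinAt φ (φ' ξ) (Set.Ioi b) ξ := by
    intro ξ _
    have h1 : HasDerivAt (fun ξ : ℝ => -ξ / γ ^ 2) (-1 / γ ^ 2) ξ := by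
      simpa using ((hasDerivAt_id ξ).neg.div_const (γ ^ 2))
    exact ((h1.exp).const_mul A0).hasDerivWithinAt
  have hA0γ : (0:ℝ) < A0 ^ (γ ^ 2) := Real.rpow_pos_of_pos hA0 _
  -- pointwise transformation of the integrand
  have hpoint : ∀ (n : ℕ) (ξ : ℝ),
      |φ' ξ| • ((γ ^ 2 / A0 ^ (γ ^ 2)) * (φ ξ) ^ (γ ^ 2 - 1)
          * (γ ^ 2 * Real.log (A0 / φ ξ)) ^ n)
        = ξ ^ n * Real.exp (-ξ) := by
    intro n ξ
    have habs : |φ' ξ| = A0 / γ ^ 2 * Real.exp (-ξ / γ ^ 2) := by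
      simp only [hφ']
      rw [show A0 * (Real.exp (-ξ / γ ^ 2) * (-1 / γ ^ 2))
          = -(A0 / γ ^ 2 * Real.exp (-ξ / γ ^ 2)) by ring, abs_neg,
        abs_of_nonneg (by positivity)]
    rw [habs, hφlog ξ, smul_eq_mul]
    simp only [hφ]
    rw [Real.mul_rpow hA0.le (Real.exp_pos _).le, ← Real.exp_mul,
      Real.rpow_sub hA0, Real.rpow_one]
    have hE : Real.exp (-ξ / γ ^ 2) * Real.exp (-ξ / γ ^ 2 * (γ ^ 2 - 1))
        = Real.exp (-ξ) := by
      rw [← Real.exp_add]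
      congr 1
      field_simp
      ring
    have hc : A0 / γ ^ 2 * (γ ^ 2 / A0 ^ (γ ^ 2)) * (A0 ^ (γ ^ 2) / A0) = 1 := by
      field_simp
    calc A0 / γ ^ 2 * Real.exp (-ξ / γ ^ 2) *
          (γ ^ 2 / A0 ^ (γ ^ 2) * (A0 ^ (γ ^ 2) / A0 * Real.exp (-ξ / γ ^ 2 * (γ ^ 2 - 1)))
            * ξ ^ n)
        = A0 / γ ^ 2 * (γ ^ 2 / A0 ^ (γ ^ 2)) * (A0 ^ (γ ^ 2) / A0)
            * (Real.exp (-ξ / γ ^ 2) * Real.exp (-ξ / γ ^ 2 * (γ ^ 2 - 1))) * ξ ^ n := by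
          ring
      _ = ξ ^ n * Real.exp (-ξ) := by rw [hc, hE]; ring
  -- the per-term change of variables
  have hkey : ∀ n : ℕ,
      (∫ t in Set.Ioo (0:ℝ) x,
          (γ ^ 2 / A0 ^ (γ ^ 2)) * t ^ (γ ^ 2 - 1) * (γ ^ 2 * Real.log (A0 / t)) ^ n)
        = ∫ ξ in Set.Ioi b, ξ ^ n * Real.exp (-ξ) := by
    intro n
    rw [← himg, integral_image_eq_integral_abs_deriv_smul measurableSet_Ioi hderiv
      (hφinj.injOn)]
    exact setIntegral_congr_fun measurableSet_Ioi fun ξ _ => hpoint n ξ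
  -- integrability of ξ^n e^{-ξ} on Ioi 0 and Ioi b
  have hfun : ∀ n : ℕ, (fun x : ℝ => Real.exp (-x) * x ^ ((n:ℝ) + 1 - 1))
      = fun x : ℝ => x ^ n * Real.exp (-x) := by
    intro n
    funext x
    rw [add_sub_cancel_right, Real.rpow_natCast, mul_comm]
  have hexp_int0 : ∀ n : ℕ,
      IntegrableOn (fun ξ : ℝ => ξ ^ n * Real.exp (-ξ)) (Set.Ioi (0:ℝ)) := by
    intro n
    have h1 := Real.GammaIntegral_convergent (s := (n:ℝ) + 1) (by positivity)
    rwa [hfun n] at h1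
  have hexp_int : ∀ n : ℕ,
      IntegrableOn (fun ξ : ℝ => ξ ^ n * Real.exp (-ξ)) (Set.Ioi b) :=
    fun n => (hexp_int0 n).mono_set (Set.Ioi_subset_Ioi hb0)
  -- integrability of each term on Ioc 0 x
  have hg_int : ∀ n : ℕ, IntegrableOn
      (fun t => (γ ^ 2 / A0 ^ (γ ^ 2)) * t ^ (γ ^ 2 - 1)
        * (γ ^ 2 * Real.log (A0 / t)) ^ n) (Set.Ioc (0:ℝ) x) := by
    intro n
    rw [integrableOn_Ioc_iff_integrableOn_Ioo, ← himg,
      integrableOn_image_iff_integrableOn_abs_deriv_smul measurableSet_Ioi hderiv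
        (hφinj.injOn)]
    exact (hexp_int n).congr_fun (fun ξ _ => (hpoint n ξ).symm) measurableSet_Ioi
  -- the series of functions
  set F : ℕ → ℝ → ℝ := fun n t =>
    (Real.exp (-ν) * (ν ^ n / ((n.factorial : ℝ)) ^ 2)) *
      ((γ ^ 2 / A0 ^ (γ ^ 2)) * t ^ (γ ^ 2 - 1) * (γ ^ 2 * Real.log (A0 / t)) ^ n)
    with hF
  have hFint : ∀ n, Integrable (F n) (volume.restrict (Set.Ioc (0:ℝ) x)) :=
    fun n => (hg_int n).const_mul _
  have hFval : ∀ n, (∫ t in Set.Ioc (0:ℝ) x, F n t)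
      = (Real.exp (-ν) * (ν ^ n / ((n.factorial : ℝ)) ^ 2)) *
          ∫ ξ in Set.Ioi b, ξ ^ n * Real.exp (-ξ) := by
    intro n
    rw [hF]
    rw [MeasureTheory.integral_const_mul, integral_Ioc_eq_integral_Ioo, hkey n]
  have hF0 : ∀ n, ∀ t ∈ Set.Ioc (0:ℝ) x, 0 ≤ F n t := by
    intro n t ht
    have hL0 : 0 ≤ Real.log (A0 / t) :=
      Real.log_nonneg ((one_le_div ht.1).mpr (ht.2.trans hxA))
    apply mul_nonneg
    · exact mul_nonneg (Real.exp_pos _).le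
        (div_nonneg (pow_nonneg hν0 n) (by positivity))
    · exact mul_nonneg (mul_nonneg (by positivity) (Real.rpow_nonneg ht.1.le _))
        (pow_nonneg (mul_nonneg hγ2.le hL0) n)
  have hInonneg : ∀ n : ℕ, 0 ≤ ∫ ξ in Set.Ioi b, ξ ^ n * Real.exp (-ξ) := by
    intro n
    apply setIntegral_nonneg measurableSet_Ioi
    intro ξ hξ
    exact mul_nonneg (pow_nonneg (hb0.trans (le_of_lt hξ)) n) (Real.exp_pos _).le
  have hIle : ∀ n : ℕ, (∫ ξ in Set.Ioi b, ξ ^ n * Real.exp (-ξ))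
      ≤ (n.factorial : ℝ) := by
    intro n
    have h1 : (∫ ξ in Set.Ioi b, ξ ^ n * Real.exp (-ξ))
        ≤ ∫ ξ in Set.Ioi (0:ℝ), ξ ^ n * Real.exp (-ξ) := by
      apply setIntegral_mono_set (hexp_int0 n)
      · filter_upwards [ae_restrict_mem measurableSet_Ioi] with ξ hξ
        exact mul_nonneg (pow_nonneg (le_of_lt hξ) n) (Real.exp_pos _).le
      · exact HasSubset.Subset.eventuallyLE (Set.Ioi_subset_Ioi hb0)
    have h2 : (∫ ξ in Set.Ioi (0:ℝ), ξ ^ n * Real.exp (-ξ)) = (n.factorial : ℝ) := by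
      have h3 := Real.Gamma_eq_integral (s := (n:ℝ) + 1) (by positivity)
      rw [hfun n] at h3
      rw [← h3]
      exact_mod_cast Real.Gamma_nat_eq_factorial n
    exact h1.trans_eq h2
  -- summability of the integrals of the norms
  have hFnorm : ∀ n, (∫ t in Set.Ioc (0:ℝ) x, ‖F n t‖)
      = ∫ t in Set.Ioc (0:ℝ) x, F n t :=
    fun n => setIntegral_congr_fun measurableSet_Ioc
      fun t ht => Real.norm_of_nonneg (hF0 n t ht)
  have hfact_ne : ∀ n : ℕ, ((n.factorial : ℝ)) ≠ 0 :=
    fun n => Nat.cast_ne_zero.mpr n.factorial_ne_zero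
  have hFsum : Summable fun n => ∫ t in Set.Ioc (0:ℝ) x, ‖F n t‖ := by
    apply Summable.of_nonneg_of_le
      (fun n => integral_nonneg fun t => norm_nonneg _)
      (fun n => ?_)
      ((Real.summable_pow_div_factorial ν).mul_left (Real.exp (-ν)))
    rw [hFnorm n, hFval n]
    calc (Real.exp (-ν) * (ν ^ n / ((n.factorial : ℝ)) ^ 2)) *
          ∫ ξ in Set.Ioi b, ξ ^ n * Real.exp (-ξ)
        ≤ (Real.exp (-ν) * (ν ^ n / ((n.factorial : ℝ)) ^ 2)) * (n.factorial : ℝ) := by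
          apply mul_le_mul_of_nonneg_left (hIle n)
          exact mul_nonneg (Real.exp_pos _).le
            (div_nonneg (pow_nonneg hν0 n) (by positivity))
      _ = Real.exp (-ν) * (ν ^ n / (n.factorial : ℝ)) := by
          field_simp
  -- pointwise identity on (0, x]
  have hpw : ∀ t ∈ Set.Ioc (0:ℝ) x, fh t = ∑' n : ℕ, F n t := by
    intro t ht
    obtain ⟨ht0, htx⟩ := ht
    have htA : t ≤ A0 := htx.trans hxA
    have hL0 : 0 ≤ Real.log (A0 / t) :=
      Real.log_nonneg ((one_le_div ht0).mpr htA)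
    rw [hfh t ht0 htA, hI0, ← tsum_mul_left]
    apply tsum_congr
    intro n
    have hsq : Real.sqrt (ω ^ 2 / 2 * Real.log (A0 / t)) ^ 2
        = ω ^ 2 / 2 * Real.log (A0 / t) :=
      Real.sq_sqrt (by positivity)
    have hkey2 : ((s / (ℓ ^ 2 * σ ^ 2)) * Real.sqrt (ω ^ 2 / 2 * Real.log (A0 / t)) / 2) ^ 2
        = ν * (γ ^ 2 * Real.log (A0 / t)) := by
      rw [div_pow, mul_pow, hsq, hν, hγ]
      field_simp
    rw [pow_mul, hkey2, mul_pow, hF]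
    ring
  -- put everything together
  rw [intervalIntegral.integral_of_le hx.le]
  calc (∫ t in Set.Ioc (0:ℝ) x, fh t)
      = ∫ t in Set.Ioc (0:ℝ) x, ∑' n : ℕ, F n t :=
        setIntegral_congr_fun measurableSet_Ioc hpw
    _ = ∑' n : ℕ, ∫ t in Set.Ioc (0:ℝ) x, F n t :=
        (MeasureTheory.integral_tsum_of_summable_integral_norm hFint hFsum).symm
    _ = ∑' n : ℕ, Real.exp (-ν) * ((ν ^ n / ((n.factorial : ℝ)) ^ 2) *
          ∫ ξ in Set.Ioi b, ξ ^ n * Real.exp (-ξ)) := by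
        apply tsum_congr
        intro n
        rw [hFval n, mul_assoc]
    _ = Real.exp (-ν) * ∑' n : ℕ, (ν ^ n / ((n.factorial : ℝ)) ^ 2) *
          ∫ ξ in Set.Ioi b, ξ ^ n * Real.exp (-ξ) := tsum_mul_left
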